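/- arXiv:1207.5383 — 3 statements merged into one kernel-verified Lean document; each statement's English description precedes it below -/
import Mathlib

section
/- Let S be a closed subspace of L²(G) with orthogonal projection P : L²(G) → S, and suppose S is a reproducing kernel space: there is a constant C such that for every f ∈ S and x ∈ G, |f(x)| ≤ C‖f‖₂, with point evaluation given by f(x) = ⟨f, E_x⟩ for some E_x ∈ S with ‖E_x‖₂ ≤ C. If m ∈ L¹(G) ∩ L∞(G) is nonnegative, then the multiplier M_m : S → S, M_m(f) = P(m f), is trace class and trace(M_m) ≤ C²‖m‖₁. -/
open MeasureTheory

/-- If `S ⊆ L²(G)` is a closed reproducing kernel subspace (point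
evaluations represented by kernel elements `E x ∈ S` with `‖E x‖ ≤ C`), and
`m ∈ L¹ ∩ L∞` is nonnegative, then the multiplier `M_m f = P (m f)` is trace
class on `S` with `trace(M_m) ≤ C² ‖m‖₁`: for every orthonormal (Hilbert) basis
`(e i)` of `S`, the diagonal sums are summable with total at most `C² ∫ m`. -/
theorem stmt1 {α : Type*} [MeasurableSpace α] {μ : Measure α} [SigmaFinite μ]
    (S : Submodule ℂ (Lp ℂ 2 μ)) [CompleteSpace S]
    (C : ℝ) (E : α → S) (hEnorm : ∀ x, ‖E x‖ ≤ C)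
    (hrepr : ∀ f : S, ∀ᵐ x ∂μ, ((f : Lp ℂ 2 μ) : α → ℂ) x = inner ℂ (E x) f)
    (m : α → ℝ) (hmmeas : AEMeasurable m μ) (hm0 : ∀ᵐ x ∂μ, 0 ≤ m x)
    (hmint : Integrable m μ) (hmbd : ∃ B, ∀ᵐ x ∂μ, |m x| ≤ B)
    (Mul : Lp ℂ 2 μ → Lp ℂ 2 μ)
    (hMul : ∀ f : Lp ℂ 2 μ, (Mul f : α → ℂ) =ᵐ[μ] fun x => (m x : ℂ) * f x) :
    ∀ {ι : Type*} (e : HilbertBasis ι ℂ S),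
      Summable (fun i =>
        (inner ℂ (S.orthogonalProjectionOnto (Mul (e i : Lp ℂ 2 μ))) (e i) : ℂ).re) ∧
      ∑' i, (inner ℂ (S.orthogonalProjectionOnto (Mul (e i : Lp ℂ 2 μ))) (e i) : ℂ).re
        ≤ C ^ 2 * ∫ x, m x ∂μ := by
  intro ι e
  obtain ⟨B, hB⟩ := hmbd
  set F : ι → (α → ℂ) := fun i => ((e i : Lp ℂ 2 μ) : α → ℂ) with hF
  -- integrability of x ↦ ‖F i x‖ ^ 2
  have hFint : ∀ i, Integrable (fun x => ‖F i x‖ ^ 2) μ := by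
    intro i
    have := (L2.integrable_inner (𝕜 := ℂ) (e i : Lp ℂ 2 μ) (e i : Lp ℂ 2 μ)).re
    refine this.congr (Filter.Eventually.of_forall fun x => ?_)
    exact inner_self_eq_norm_sq _
  -- integrability of x ↦ m x * ‖F i x‖ ^ 2
  have hgint : ∀ i, Integrable (fun x => m x * ‖F i x‖ ^ 2) μ := by
    intro i
    refine Integrable.mono' ((hFint i).const_mul B) ?_ ?_
    · exact (hmmeas.mul ((Lp.aestronglyMeasurable
        (e i : Lp ℂ 2 μ)).norm.pow 2).aemeasurable).aestronglyMeasurable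
    · filter_upwards [hB] with x hx
      have habs : |‖F i x‖ ^ 2| = ‖F i x‖ ^ 2 :=
        abs_of_nonneg (pow_nonneg (norm_nonneg _) 2)
      rw [Real.norm_eq_abs, abs_mul, habs]
      exact mul_le_mul_of_nonneg_right hx (pow_nonneg (norm_nonneg _) 2)
  -- the diagonal entries
  have key : ∀ i, (inner ℂ (S.orthogonalProjectionOnto (Mul (e i : Lp ℂ 2 μ))) (e i) : ℂ).re
      = ∫ x, m x * ‖F i x‖ ^ 2 ∂μ := by
    intro i
    have h1 : (inner ℂ (S.orthogonalProjectionOnto (Mul (e i : Lp ℂ 2 μ))) (e i) : ℂ)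
        = inner ℂ (Mul (e i : Lp ℂ 2 μ)) ((e i : Lp ℂ 2 μ)) :=
      Submodule.inner_orthogonalProjectionOnto_eq_of_mem_right (K := S) (e i) (Mul (e i : Lp ℂ 2 μ))
    rw [h1, ← RCLike.re_to_complex, L2.inner_def,
      ← integral_re (L2.integrable_inner (Mul (e i : Lp ℂ 2 μ)) ((e i : Lp ℂ 2 μ)))]
    refine integral_congr_ae ?_
    filter_upwards [hMul (e i : Lp ℂ 2 μ)] with x hx
    rw [RCLike.inner_apply, hx]
    simp only [map_mul, Complex.conj_ofReal, RCLike.re_to_complex,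
      Complex.sq_norm, Complex.normSq_apply, Complex.mul_re, Complex.mul_im,
      Complex.ofReal_re, Complex.ofReal_im, Complex.conj_re, Complex.conj_im, F]
    ring
  simp only [key]
  -- nonnegativity
  have hnn : ∀ i, 0 ≤ ∫ x, m x * ‖F i x‖ ^ 2 ∂μ := by
    intro i
    refine integral_nonneg_of_ae ?_
    filter_upwards [hm0] with x hx
    positivity
  -- finite sum bound
  have hsum : ∀ s : Finset ι,
      ∑ i ∈ s, ∫ x, m x * ‖F i x‖ ^ 2 ∂μ ≤ C ^ 2 * ∫ x, m x ∂μ := by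
    intro s
    rw [← integral_finset_sum s (fun i _ => hgint i)]
    have hle : ∀ᵐ x ∂μ, ∑ i ∈ s, m x * ‖F i x‖ ^ 2 ≤ C ^ 2 * m x := by
      have hall : ∀ᵐ x ∂μ, ∀ i ∈ s, F i x = inner ℂ (E x) (e i) :=
        (ae_ball_iff s.countable_toSet).2 fun i _ => hrepr (e i)
      filter_upwards [hm0, hall] with x hx hFx
      rw [← Finset.mul_sum]
      have hb : ∑ i ∈ s, ‖F i x‖ ^ 2 ≤ C ^ 2 := by
        have h1 : ∑ i ∈ s, ‖F i x‖ ^ 2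
            = ∑ i ∈ s, ‖(inner ℂ (e i) (E x) : ℂ)‖ ^ 2 := by
          refine Finset.sum_congr rfl fun i hi => ?_
          rw [hFx i hi]
          exact congrArg (· ^ 2) (norm_inner_symm (𝕜 := ℂ) (E x) (e i))
        have h2 := (e.orthonormal).sum_inner_products_le (s := s) (E x)
        calc ∑ i ∈ s, ‖F i x‖ ^ 2 = _ := h1
          _ ≤ ‖E x‖ ^ 2 := h2
          _ ≤ C ^ 2 := pow_le_pow_left₀ (norm_nonneg _) (hEnorm x) 2
      calc m x * ∑ i ∈ s, ‖F i x‖ ^ 2 ≤ m x * C ^ 2 :=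
            mul_le_mul_of_nonneg_left hb hx
        _ = C ^ 2 * m x := mul_comm _ _
    calc (∫ x, ∑ i ∈ s, m x * ‖F i x‖ ^ 2 ∂μ) ≤ ∫ x, C ^ 2 * m x ∂μ :=
          integral_mono_ae (integrable_finset_sum s fun i _ => hgint i)
            (hmint.const_mul _) hle
      _ = C ^ 2 * ∫ x, m x ∂μ := integral_const_mul _ _
  exact ⟨summable_of_sum_le hnn hsum,
    Summable.tsum_le_of_sum_le (summable_of_sum_le hnn hsum) hsum⟩
end

section
/- A polyanalytic function of order n on ℂ that vanishes on a nonempty open subset of ℂ vanishes identically. Here F : ℂ → ℂ is polyanalytic of order n if F(z) = Σ_{k=0}^{n-1} conj(z)^k F_k(z) with each F_k entire (equivalently (∂/∂z̄)ⁿ F ≡ 0 for the smooth function F). -/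
/-- A polyanalytic function of order `n` on `ℂ`, i.e.
`F z = Σ_{k<n} conj(z)^k F_k z` with each `F_k` entire, that vanishes on a
nonempty open subset of `ℂ` vanishes identically. -/
theorem stmt14 (n : ℕ) (F : ℂ → ℂ) (Fk : Fin n → ℂ → ℂ)
    (hFk : ∀ k, Differentiable ℂ (Fk k))
    (hF : ∀ z : ℂ, F z = ∑ k : Fin n, (starRingEnd ℂ z) ^ (k : ℕ) * Fk k z)
    (U : Set ℂ) (hU : IsOpen U) (hUne : U.Nonempty)
    (hvanish : ∀ z ∈ U, F z = 0) :
    ∀ z : ℂ, F z = 0 := by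
  have hconj : AnalyticOnNhd ℝ (fun z : ℂ => (starRingEnd ℂ) z) Set.univ := by
    have := (Complex.conjCLE : ℂ →L[ℝ] ℂ).analyticOnNhd (Set.univ : Set ℂ)
    exact this
  have hA : AnalyticOnNhd ℝ F Set.univ := by
    have h : AnalyticOnNhd ℝ
        (fun z => ∑ k : Fin n, (starRingEnd ℂ z) ^ (k : ℕ) * Fk k z) Set.univ := by
      apply Finset.analyticOnNhd_fun_sum
      intro k _
      exact (hconj.pow _).mul
        ((((hFk k).differentiableOn).analyticOnNhd isOpen_univ).restrictScalars)
    have : F = fun z => ∑ k : Fin n, (starRingEnd ℂ z) ^ (k : ℕ) * Fk k z :=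
      funext hF
    rw [this]; exact h
  obtain ⟨z₀, hz₀⟩ := hUne
  have heq : F =ᶠ[nhds z₀] 0 :=
    Filter.eventuallyEq_of_mem (hU.mem_nhds hz₀) hvanish
  intro z
  exact hA.eqOn_zero_of_preconnected_of_eventuallyEq_zero isPreconnected_univ
    (Set.mem_univ z₀) heq (Set.mem_univ z)
end

section
/- Let φ ∈ L²(ℝ) \ {0} be the Gaussian φ(t) = 2^{1/4} e^{-πt²}, and Ω ⊆ ℝ² a measurable set with nonempty interior. Then the time-frequency localization operator H_Ω f = V_φ*(1_Ω V_φ f) on L²(ℝ) has infinite rank. -/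
open MeasureTheory

/-- The one-dimensional short-time Fourier transform
`V_φ f (x, ξ) = ∫ f t conj(φ (t-x)) e^{-2πi ξ t} dt`. -/
noncomputable def STFT1 (φ f : ℝ → ℂ) (p : ℝ × ℝ) : ℂ :=
  ∫ t : ℝ, f t * (starRingEnd ℂ) (φ (t - p.1)) *
    Complex.exp (-2 * Real.pi * Complex.I * (p.2 * t : ℝ))

/-- The time-frequency localization operator
`H_Ω f (t) = ∫_Ω V_φ f(x,ξ) φ(t-x) e^{2πi ξ t} dx dξ`. -/
noncomputable def locOpSet1 (φ : ℝ → ℂ) (Ω : Set (ℝ × ℝ)) (f : ℝ → ℂ) (t : ℝ) : ℂ :=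
  ∫ z in Ω, STFT1 φ f z * φ (t - z.1) *
    Complex.exp (2 * Real.pi * Complex.I * (z.2 * t : ℝ))

/-- The normalized Gaussian window `φ(t) = 2^{1/4} e^{-π t²}`. -/
noncomputable def gaussWindow (t : ℝ) : ℂ :=
  ((2 : ℝ) ^ ((1 : ℝ) / 4) : ℝ) * Complex.exp (-(Real.pi * t ^ 2))


open Complex Real

/-- Our test functions: Gaussians with a linear twist. -/
noncomputable def ga (a t : ℝ) : ℂ := Complex.exp ((2*Real.pi*a*t - Real.pi*t^2 : ℝ) : ℂ)

/-- The constant in the STFT formula. -/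
noncomputable def C0 : ℂ :=
  (((2:ℝ) ^ ((1:ℝ)/4) : ℝ) : ℂ) * ((Real.pi : ℂ) / (2 * Real.pi)) ^ ((1:ℂ)/2)

lemma C0_ne_zero : C0 ≠ 0 := by
  apply mul_ne_zero
  · simpa using (Real.rpow_pos_of_pos (by norm_num) ((1:ℝ)/4)).ne'
  · rw [Ne, Complex.cpow_eq_zero_iff]
    rintro ⟨h, -⟩
    rw [div_eq_zero_iff] at h
    simp [Real.pi_ne_zero] at h

lemma norm_ga (a t : ℝ) : ‖ga a t‖ = Real.exp (2*Real.pi*a*t - Real.pi*t^2) := by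
  rw [ga, Complex.norm_exp, Complex.ofReal_re]

/-- The integrand of the STFT of `ga a` is a Gaussian in explicit quadratic form. -/
lemma stft_integrand (a x ξ t : ℝ) :
    ga a t * (starRingEnd ℂ) (gaussWindow (t - x)) *
      Complex.exp (-2 * Real.pi * Complex.I * (ξ * t : ℝ)) =
    (((2:ℝ) ^ ((1:ℝ)/4) : ℝ) : ℂ) * Complex.exp ((-2*(Real.pi:ℂ)) * t^2
      + (2*Real.pi*a + 2*Real.pi*x - 2*Real.pi*Complex.I*ξ) * t + (-(Real.pi:ℂ)*x^2)) := by
  simp only [ga, gaussWindow, map_mul, ← Complex.exp_conj, map_neg, map_pow, map_sub, map_ofNat,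
    Complex.conj_ofReal, Complex.conj_I]
  push_cast
  rw [show ∀ A B C : ℂ, cexp A * (↑((2:ℝ)^((1:ℝ)/4)) * cexp B) * cexp C
      = ↑((2:ℝ)^((1:ℝ)/4)) * cexp (A + B + C) from by
    intros; rw [Complex.exp_add, Complex.exp_add]; ring]
  congr 1
  ring

lemma stft_integrable (a x ξ : ℝ) :
    Integrable (fun t : ℝ => ga a t * (starRingEnd ℂ) (gaussWindow (t - x)) *
      Complex.exp (-2 * Real.pi * Complex.I * (ξ * t : ℝ))) := by
  simp only [stft_integrand]
  exact (integrable_cexp_quadratic' (b := -2*(Real.pi:ℂ)) (by simp [Real.pi_pos])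
    _ _).const_mul _

lemma stft_ga (a x ξ : ℝ) : STFT1 gaussWindow (ga a) (x, ξ) =
    C0 * Complex.exp (-(Real.pi:ℂ)*x^2 + (Real.pi:ℂ)/2 * ((a:ℂ) + x - Complex.I*ξ)^2) := by
  have h0 : STFT1 gaussWindow (ga a) (x, ξ) = ∫ t : ℝ, ga a t *
      (starRingEnd ℂ) (gaussWindow (t - x)) *
      Complex.exp (-2 * Real.pi * Complex.I * (ξ * t : ℝ)) := rfl
  rw [h0]
  simp_rw [stft_integrand, MeasureTheory.integral_const_mul]
  rw [integral_cexp_quadratic (by simp [Real.pi_pos]) _ _]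
  have hπ : (Real.pi : ℂ) ≠ 0 := Complex.ofReal_ne_zero.mpr Real.pi_ne_zero
  have h1 : ((Real.pi:ℂ) / -(-2*(Real.pi:ℂ))) ^ ((1:ℂ)/2)
      = ((Real.pi : ℂ)/(2*Real.pi)) ^ ((1:ℂ)/2) := by norm_num
  have h2 : ((-(Real.pi:ℂ)*x^2) - ((2:ℂ)*Real.pi*a + 2*Real.pi*x - 2*Real.pi*Complex.I*ξ)^2
        / (4*(-2*(Real.pi:ℂ)))) =
      (-(Real.pi:ℂ)*x^2 + (Real.pi:ℂ)/2 * ((a:ℂ) + x - Complex.I*ξ)^2) := by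
    field_simp
    ring
  rw [h1, h2, C0, mul_assoc]

lemma exp_split (a x ξ : ℝ) :
    (-(Real.pi:ℂ)*x^2 + (Real.pi:ℂ)/2 * ((a:ℂ) + x - Complex.I*ξ)^2)
    = ((Real.pi*a^2 - Real.pi/2*((x-a)^2 + ξ^2) : ℝ) : ℂ)
      + ((-(Real.pi*ξ*(a+x)) : ℝ) : ℂ) * Complex.I := by
  have hI : Complex.I^2 = -1 := Complex.I_sq
  push_cast
  linear_combination (Real.pi : ℂ)/2 * ξ^2 * hI

lemma norm_stft_ga (a x ξ : ℝ) : ‖STFT1 gaussWindow (ga a) (x, ξ)‖ =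
    ‖C0‖ * Real.exp (Real.pi*a^2 - Real.pi/2*((x-a)^2 + ξ^2)) := by
  rw [stft_ga, exp_split, norm_mul]
  congr 1
  rw [Complex.norm_exp]
  simp [← Complex.ofReal_pow, ← Complex.ofReal_sub]

lemma cont_stft (a : ℝ) : Continuous (STFT1 gaussWindow (ga a)) := by
  have h : STFT1 gaussWindow (ga a) = fun z : ℝ × ℝ =>
      C0 * Complex.exp (-(Real.pi:ℂ)*z.1^2
        + (Real.pi:ℂ)/2 * ((a:ℂ) + z.1 - Complex.I*z.2)^2) := by
    funext z
    cases z with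
    | mk x ξ => exact stft_ga a x ξ
  rw [h]
  fun_prop

lemma cont_ga (a : ℝ) : Continuous (ga a) := by
  unfold ga; fun_prop

lemma cont_gaussWindow : Continuous gaussWindow := by
  unfold gaussWindow; fun_prop

lemma memℒp_ga (a : ℝ) : MemLp (ga a) 2 (volume : Measure ℝ) := by
  rw [memLp_two_iff_integrable_sq_norm (cont_ga a).aestronglyMeasurable]
  have h : (fun t : ℝ => ‖ga a t‖^2)
      = fun t => Real.exp (2*Real.pi*a^2) * Real.exp (-(2*Real.pi) * (t - a)^2) := by
    funext t
    rw [norm_ga, sq, ← Real.exp_add, ← Real.exp_add]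
    congr 1
    ring
  rw [h]
  exact (((integrable_exp_neg_mul_sq (by positivity)).comp_sub_right a).const_mul _)

lemma integrable_gauss2 {c : ℝ} (hc : 0 < c) (p q : ℝ) :
    Integrable (fun z : ℝ × ℝ => Real.exp (-c*((z.1-p)^2 + (z.2-q)^2)))
      (volume : Measure (ℝ×ℝ)) := by
  have h1 : Integrable (fun x : ℝ => Real.exp (-c*(x-p)^2)) :=
    (integrable_exp_neg_mul_sq hc).comp_sub_right p
  have h2 : Integrable (fun x : ℝ => Real.exp (-c*(x-q)^2)) :=
    (integrable_exp_neg_mul_sq hc).comp_sub_right q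
  have h : (fun z : ℝ×ℝ => Real.exp (-c*((z.1-p)^2+(z.2-q)^2)))
      = fun z => Real.exp (-c*(z.1-p)^2) * Real.exp (-c*(z.2-q)^2) := by
    funext z
    rw [← Real.exp_add]
    congr 1
    ring
  rw [h, Measure.volume_eq_prod]
  exact h1.mul_prod h2

lemma norm_stft_le (a x ξ : ℝ) : ‖STFT1 gaussWindow (ga a) (x,ξ)‖ ≤
    ‖C0‖ * Real.exp ((3/2)*Real.pi*a^2) * Real.exp (-(Real.pi/4)*(x^2+ξ^2)) := by
  rw [norm_stft_ga, mul_assoc, ← Real.exp_add]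
  refine mul_le_mul_of_nonneg_left (Real.exp_le_exp.mpr ?_) (norm_nonneg C0)
  nlinarith [Real.pi_pos, sq_nonneg (x - 2*a), sq_nonneg ξ]

lemma norm_ga_le (a t : ℝ) :
    ‖ga a t‖ ≤ Real.exp (2*Real.pi*a^2) * Real.exp (-(Real.pi/2)*t^2) := by
  rw [norm_ga, ← Real.exp_add]
  refine Real.exp_le_exp.mpr ?_
  nlinarith [Real.pi_pos, sq_nonneg (t - 2*a)]

lemma norm_gaussWindow_le (s : ℝ) : ‖gaussWindow s‖ ≤ (2:ℝ)^((1:ℝ)/4) := by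
  rw [gaussWindow, norm_mul]
  have h1 : ‖((((2:ℝ) ^ ((1:ℝ)/4)) : ℝ) : ℂ)‖ = (2:ℝ)^((1:ℝ)/4) := by
    rw [Complex.norm_real]
    exact abs_of_pos (Real.rpow_pos_of_pos (by norm_num) _)
  rw [h1]
  nth_rewrite 2 [show ((2:ℝ)^((1:ℝ)/4)) = ((2:ℝ)^((1:ℝ)/4)) * 1 from (mul_one _).symm]
  refine mul_le_mul_of_nonneg_left ?_ (by positivity)
  rw [show (-((Real.pi:ℂ) * (s:ℂ)^2)) = (((-(Real.pi * s^2)) : ℝ) : ℂ) from by push_cast; ring,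
    Complex.norm_exp, Complex.ofReal_re]
  exact Real.exp_le_one_iff.mpr (neg_nonpos.mpr (by positivity))

lemma norm_phase_neg (r : ℝ) : ‖Complex.exp (-2*(Real.pi:ℂ)*Complex.I*(r:ℂ))‖ = 1 := by
  rw [Complex.norm_exp]
  simp [Complex.mul_re]

lemma norm_phase_pos (r : ℝ) : ‖Complex.exp (2*(Real.pi:ℂ)*Complex.I*(r:ℂ))‖ = 1 := by
  rw [Complex.norm_exp]
  simp [Complex.mul_re]

lemma integrable_gauss2' {c : ℝ} (hc : 0 < c) :
    Integrable (fun z : ℝ × ℝ => Real.exp (-c*(z.1^2 + z.2^2)))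
      (volume : Measure (ℝ×ℝ)) := by
  simpa using integrable_gauss2 hc 0 0

lemma cont_locint (a t : ℝ) : Continuous (fun z : ℝ×ℝ =>
    STFT1 gaussWindow (ga a) z * gaussWindow (t - z.1) *
      Complex.exp (2 * Real.pi * Complex.I * (z.2 * t : ℝ))) := by
  refine Continuous.mul (Continuous.mul (cont_stft a) ?_) ?_
  · exact cont_gaussWindow.comp (continuous_const.sub continuous_fst)
  · exact Complex.continuous_exp.comp (continuous_const.mul
      (Complex.continuous_ofReal.comp (continuous_snd.mul continuous_const)))

lemma norm_locint_le (a t : ℝ) (z : ℝ×ℝ) :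
    ‖STFT1 gaussWindow (ga a) z * gaussWindow (t - z.1) *
      Complex.exp (2 * Real.pi * Complex.I * (z.2 * t : ℝ))‖ ≤
    (‖C0‖ * Real.exp ((3/2)*Real.pi*a^2) * (2:ℝ)^((1:ℝ)/4))
      * Real.exp (-(Real.pi/4)*(z.1^2+z.2^2)) := by
  have h1 := norm_stft_le a z.1 z.2
  rw [Prod.mk.eta] at h1
  rw [norm_mul, norm_mul, norm_phase_pos, mul_one]
  calc ‖STFT1 gaussWindow (ga a) z‖ * ‖gaussWindow (t - z.1)‖
      ≤ (‖C0‖ * Real.exp ((3/2)*Real.pi*a^2) * Real.exp (-(Real.pi/4)*(z.1^2+z.2^2)))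
        * ((2:ℝ)^((1:ℝ)/4)) := by
        refine mul_le_mul h1 (norm_gaussWindow_le _) (norm_nonneg _) (by positivity)
    _ = (‖C0‖ * Real.exp ((3/2)*Real.pi*a^2) * (2:ℝ)^((1:ℝ)/4))
        * Real.exp (-(Real.pi/4)*(z.1^2+z.2^2)) := by ring

lemma integrable_locint (a t : ℝ) (Ω : Set (ℝ × ℝ)) :
    Integrable (fun z : ℝ×ℝ => STFT1 gaussWindow (ga a) z * gaussWindow (t - z.1) *
      Complex.exp (2 * Real.pi * Complex.I * (z.2 * t : ℝ)))
      ((volume : Measure (ℝ×ℝ)).restrict Ω) := by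
  refine Integrable.mono'
    (((integrable_gauss2' (by positivity)).const_mul
      (‖C0‖ * Real.exp ((3/2)*Real.pi*a^2) * (2:ℝ)^((1:ℝ)/4))).restrict)
    ((cont_locint a t).aestronglyMeasurable.restrict)
    (Filter.Eventually.of_forall fun z => norm_locint_le a t z)

/-- for the Gaussian window `φ(t) = 2^{1/4} e^{-πt²}` and any
measurable `Ω ⊆ ℝ²` with nonempty interior, the localization operator
`H_Ω f = V_φ*(1_Ω V_φ f)` on `L²(ℝ)` has infinite rank: for every `n` there are
`n` functions in `L²(ℝ)` whose images under `H_Ω` are linearly independent. -/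
theorem stmt15 (Ω : Set (ℝ × ℝ)) (hΩmeas : MeasurableSet Ω)
    (hΩint : (interior Ω).Nonempty) :
    ∀ n : ℕ, ∃ f : Fin n → ℝ → ℂ,
      (∀ i, MemLp (f i) 2 (volume : Measure ℝ)) ∧
      LinearIndependent ℂ (fun i => locOpSet1 gaussWindow Ω (f i)) := by
  intro n
  set a : Fin n → ℝ := fun i => ((i : ℕ) : ℝ) with ha
  refine ⟨fun i => ga (a i), fun i => memℒp_ga _, ?_⟩
  rw [Fintype.linearIndependent_iff]
  intro g hg i0
  -- the pointwise vanishing of the combination of localized pieces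
  have hgt : ∀ t : ℝ, ∑ i, g i * locOpSet1 gaussWindow Ω (ga (a i)) t = 0 := by
    intro t
    have h := congrFun hg t
    simpa [Finset.sum_apply, smul_eq_mul] using h
  -- the combined STFT
  set V : ℝ × ℝ → ℂ := fun z => ∑ i, g i * STFT1 gaussWindow (ga (a i)) z with hV
  have cont_V : Continuous V := by
    apply continuous_finset_sum
    exact fun i _ => continuous_const.mul (cont_stft (a i))
  set M : ℝ := ∑ i, ‖g i‖ * (‖C0‖ * Real.exp ((3/2)*Real.pi*(a i)^2)) with hM
  have hVle : ∀ z : ℝ × ℝ, ‖V z‖ ≤ M * Real.exp (-(Real.pi/4)*(z.1^2+z.2^2)) := by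
    intro z
    refine (norm_sum_le _ _).trans ?_
    rw [hM, Finset.sum_mul]
    refine Finset.sum_le_sum fun i _ => ?_
    rw [norm_mul]
    have h1 := norm_stft_le (a i) z.1 z.2
    rw [Prod.mk.eta] at h1
    calc ‖g i‖ * ‖STFT1 gaussWindow (ga (a i)) z‖
        ≤ ‖g i‖ * (‖C0‖ * Real.exp ((3/2)*Real.pi*(a i)^2)
            * Real.exp (-(Real.pi/4)*(z.1^2+z.2^2))) :=
          mul_le_mul_of_nonneg_left h1 (norm_nonneg _)
      _ = ‖g i‖ * (‖C0‖ * Real.exp ((3/2)*Real.pi*(a i)^2))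
            * Real.exp (-(Real.pi/4)*(z.1^2+z.2^2)) := by ring
  -- Step A : the localization of V vanishes pointwise
  have hA : ∀ t : ℝ, (∫ z in Ω, V z * gaussWindow (t - z.1) *
      Complex.exp (2 * Real.pi * Complex.I * (z.2 * t : ℝ))) = 0 := by
    intro t
    have hsum : ∀ z : ℝ × ℝ, V z * gaussWindow (t - z.1) *
        Complex.exp (2 * Real.pi * Complex.I * (z.2 * t : ℝ))
        = ∑ i, g i * (STFT1 gaussWindow (ga (a i)) z * gaussWindow (t - z.1) *
            Complex.exp (2 * Real.pi * Complex.I * (z.2 * t : ℝ))) := by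
      intro z
      rw [hV]
      rw [Finset.sum_mul, Finset.sum_mul]
      exact Finset.sum_congr rfl fun i _ => by ring
    simp_rw [hsum]
    rw [integral_finset_sum _ fun i _ => (integrable_locint (a i) t Ω).const_mul _]
    have : ∀ i : Fin n, (∫ z in Ω, g i * (STFT1 gaussWindow (ga (a i)) z *
        gaussWindow (t - z.1) * Complex.exp (2 * Real.pi * Complex.I * (z.2 * t : ℝ))))
        = g i * locOpSet1 gaussWindow Ω (ga (a i)) t := by
      intro i
      rw [MeasureTheory.integral_const_mul]
      rfl
    simp_rw [this]
    exact hgt t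
  -- the combined test function
  set F : ℝ → ℂ := fun t => ∑ i, g i * ga (a i) t with hF
  have cont_F : Continuous F :=
    continuous_finset_sum _ fun i _ => continuous_const.mul (cont_ga (a i))
  set MF : ℝ := ∑ i, ‖g i‖ * Real.exp (2*Real.pi*(a i)^2) with hMF
  have hFle : ∀ t : ℝ, ‖F t‖ ≤ MF * Real.exp (-(Real.pi/2)*t^2) := by
    intro t
    refine (norm_sum_le _ _).trans ?_
    rw [hMF, Finset.sum_mul]
    refine Finset.sum_le_sum fun i _ => ?_
    rw [norm_mul]
    calc ‖g i‖ * ‖ga (a i) t‖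
        ≤ ‖g i‖ * (Real.exp (2*Real.pi*(a i)^2) * Real.exp (-(Real.pi/2)*t^2)) :=
          mul_le_mul_of_nonneg_left (norm_ga_le _ _) (norm_nonneg _)
      _ = ‖g i‖ * Real.exp (2*Real.pi*(a i)^2) * Real.exp (-(Real.pi/2)*t^2) := by ring
  -- STFT of F equals V
  have hSTFTF : ∀ z : ℝ × ℝ, STFT1 gaussWindow F z = V z := by
    intro z
    have h0 : STFT1 gaussWindow F z = ∫ t : ℝ, ∑ i, g i * (ga (a i) t *
        (starRingEnd ℂ) (gaussWindow (t - z.1)) *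
        Complex.exp (-2 * Real.pi * Complex.I * (z.2 * t : ℝ))) := by
      rw [STFT1]
      congr 1
      funext t
      rw [hF, Finset.sum_mul, Finset.sum_mul]
      exact Finset.sum_congr rfl fun i _ => by ring
    rw [h0, integral_finset_sum _ fun i _ => (stft_integrable (a i) z.1 z.2).const_mul _]
    rw [hV]
    exact Finset.sum_congr rfl fun i _ => by rw [MeasureTheory.integral_const_mul]; rfl
  -- Fubini
  have hposint : (0:ℝ) < Real.pi/2 := by positivity
  have hM0 : (0:ℝ) ≤ M := by
    rw [hM]
    exact Finset.sum_nonneg fun i _ => by positivity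
  have hMF0 : (0:ℝ) ≤ MF := by
    rw [hMF]
    exact Finset.sum_nonneg fun i _ => by positivity
  have key : (∫ z in Ω, (Complex.normSq (V z) : ℝ)) = 0 := by
    have contK : Continuous (fun p : ℝ × (ℝ × ℝ) => V p.2 * gaussWindow (p.1 - p.2.1) *
        Complex.exp (2 * Real.pi * Complex.I * (p.2.2 * p.1 : ℝ)) *
        (starRingEnd ℂ) (F p.1)) := by
      refine ((Continuous.mul (Continuous.mul ?_ ?_) ?_).mul ?_)
      · exact cont_V.comp continuous_snd
      · exact cont_gaussWindow.comp (continuous_fst.sub (continuous_fst.comp continuous_snd))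
      · exact Complex.continuous_exp.comp (continuous_const.mul
          (Complex.continuous_ofReal.comp
            ((continuous_snd.comp continuous_snd).mul continuous_fst)))
      · exact Complex.continuous_conj.comp (cont_F.comp continuous_fst)
    have hKint : Integrable (fun p : ℝ × (ℝ × ℝ) => V p.2 * gaussWindow (p.1 - p.2.1) *
        Complex.exp (2 * Real.pi * Complex.I * (p.2.2 * p.1 : ℝ)) * (starRingEnd ℂ) (F p.1))
        ((volume : Measure ℝ).prod ((volume : Measure (ℝ×ℝ)).restrict Ω)) := by
      refine Integrable.mono' (g := fun p : ℝ × (ℝ × ℝ) => ((2:ℝ)^((1:ℝ)/4) * M * MF) *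
        (Real.exp (-(Real.pi/2)*p.1^2) * Real.exp (-(Real.pi/4)*(p.2.1^2+p.2.2^2))))
        ?_ contK.aestronglyMeasurable ?_
      · exact ((integrable_exp_neg_mul_sq hposint).mul_prod
          ((integrable_gauss2' (by positivity)).restrict)).const_mul _
      · refine Filter.Eventually.of_forall fun p => ?_
        have h1 := hVle p.2
        have h2 := norm_gaussWindow_le (p.1 - p.2.1)
        have h3 := hFle p.1
        rw [norm_mul, norm_mul, norm_mul, norm_phase_pos, mul_one]
        rw [RCLike.norm_conj]
        calc ‖V p.2‖ * ‖gaussWindow (p.1 - p.2.1)‖ * ‖F p.1‖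
            ≤ (M * Real.exp (-(Real.pi/4)*(p.2.1^2+p.2.2^2))) * ((2:ℝ)^((1:ℝ)/4))
              * (MF * Real.exp (-(Real.pi/2)*p.1^2)) := by
              gcongr <;> positivity
          _ = ((2:ℝ)^((1:ℝ)/4) * M * MF) *
              (Real.exp (-(Real.pi/2)*p.1^2) * Real.exp (-(Real.pi/4)*(p.2.1^2+p.2.2^2))) := by
              ring
    have step1 : (∫ (t:ℝ), ∫ z in Ω, (V z * gaussWindow (t - z.1) *
        Complex.exp (2 * Real.pi * Complex.I * (z.2 * t : ℝ)) * (starRingEnd ℂ) (F t))) = 0 := by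
      have hz : ∀ t : ℝ, (∫ z in Ω, V z * gaussWindow (t - z.1) *
          Complex.exp (2 * Real.pi * Complex.I * (z.2 * t : ℝ)) * (starRingEnd ℂ) (F t)) = 0 := by
        intro t
        rw [MeasureTheory.integral_mul_const, hA t, zero_mul]
      simp_rw [hz]
      simp
    have inner : ∀ z : ℝ × ℝ, (∫ t : ℝ, V z * gaussWindow (t - z.1) *
        Complex.exp (2 * Real.pi * Complex.I * (z.2 * t : ℝ)) * (starRingEnd ℂ) (F t))
        = V z * (starRingEnd ℂ) (V z) := by
      intro z
      have hc : ∀ t : ℝ, V z * gaussWindow (t - z.1) *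
          Complex.exp (2 * Real.pi * Complex.I * (z.2 * t : ℝ)) * (starRingEnd ℂ) (F t)
          = V z * (starRingEnd ℂ) (F t * (starRingEnd ℂ) (gaussWindow (t - z.1)) *
              Complex.exp (-2 * Real.pi * Complex.I * (z.2 * t : ℝ))) := by
        intro t
        simp only [map_mul, Complex.conj_conj, ← Complex.exp_conj, map_neg,
          Complex.conj_I, Complex.conj_ofReal, map_ofNat]
        rw [show (-2 * (Real.pi:ℂ) * -Complex.I * ((z.2 * t : ℝ):ℂ))
            = 2 * (Real.pi:ℂ) * Complex.I * ((z.2 * t : ℝ):ℂ) from by ring]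
        ring
      simp_rw [hc]
      rw [MeasureTheory.integral_const_mul, integral_conj]
      rw [show (∫ t : ℝ, F t * (starRingEnd ℂ) (gaussWindow (t - z.1)) *
          Complex.exp (-2 * Real.pi * Complex.I * (z.2 * t : ℝ)))
          = STFT1 gaussWindow F z from rfl, hSTFTF]
    have step2 := MeasureTheory.integral_integral_swap
      (f := fun (t : ℝ) (z : ℝ × ℝ) => V z * gaussWindow (t - z.1) *
        Complex.exp (2 * Real.pi * Complex.I * (z.2 * t : ℝ)) * (starRingEnd ℂ) (F t)) hKint
    rw [step1] at step2
    simp_rw [inner, Complex.mul_conj] at step2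
    rw [show (fun z : ℝ×ℝ => ((Complex.normSq (V z) : ℝ) : ℂ))
        = fun z => RCLike.ofReal (Complex.normSq (V z)) from rfl, integral_ofReal] at step2
    exact RCLike.ofReal_eq_zero.mp step2.symm
  -- V vanishes a.e. on Ω
  have contNS : Continuous (fun z : ℝ × ℝ => Complex.normSq (V z)) := by
    simp only [Complex.normSq_apply]
    exact ((Complex.continuous_re.comp cont_V).mul (Complex.continuous_re.comp cont_V)).add
      ((Complex.continuous_im.comp cont_V).mul (Complex.continuous_im.comp cont_V))
  have hVint2 : Integrable (fun z : ℝ × ℝ => Complex.normSq (V z))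
      ((volume : Measure (ℝ×ℝ)).restrict Ω) := by
    refine Integrable.mono' (((integrable_gauss2' hposint).const_mul (M^2)).restrict)
      contNS.aestronglyMeasurable.restrict (Filter.Eventually.of_forall fun z => ?_)
    have h1 : ‖Complex.normSq (V z)‖ = ‖V z‖^2 := by
      rw [Real.norm_eq_abs, _root_.abs_of_nonneg (Complex.normSq_nonneg _),
        Complex.normSq_eq_norm_sq]
    rw [h1]
    calc ‖V z‖^2 ≤ (M * Real.exp (-(Real.pi/4)*(z.1^2+z.2^2)))^2 := by
          have := hVle z
          have h0 := norm_nonneg (V z)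
          nlinarith
      _ = M^2 * Real.exp (-(Real.pi/2)*(z.1^2+z.2^2)) := by
          rw [mul_pow, sq (Real.exp _), ← Real.exp_add]
          congr 1
          ring
  have hVae : ∀ z ∈ interior Ω, V z = 0 := by
    have hae := (integral_eq_zero_iff_of_nonneg (fun z => Complex.normSq_nonneg _) hVint2).mp key
    intro z hz
    by_contra hne
    have hUopen : IsOpen (interior Ω ∩ V ⁻¹' {(0:ℂ)}ᶜ) :=
      isOpen_interior.inter (isOpen_compl_singleton.preimage cont_V)
    have hzU : z ∈ interior Ω ∩ V ⁻¹' {(0:ℂ)}ᶜ := ⟨hz, by simpa using hne⟩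
    have hpos : 0 < volume (interior Ω ∩ V ⁻¹' {(0:ℂ)}ᶜ) :=
      hUopen.measure_pos volume ⟨z, hzU⟩
    have hmeas : MeasurableSet {w : ℝ × ℝ | ¬ Complex.normSq (V w) = 0} := by
      have : {w : ℝ × ℝ | ¬ Complex.normSq (V w) = 0}
          = (fun w => Complex.normSq (V w)) ⁻¹' {(0:ℝ)}ᶜ := by
        ext w
        simp
      rw [this]
      exact contNS.measurable (measurableSet_singleton (0:ℝ)).compl
    have hnull : volume ({w : ℝ × ℝ | ¬ Complex.normSq (V w) = 0} ∩ Ω) = 0 := by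
      have h := hae
      rw [Filter.EventuallyEq, ae_iff] at h
      simp only [Pi.zero_apply] at h
      rwa [Measure.restrict_apply hmeas] at h
    have hsub : interior Ω ∩ V ⁻¹' {(0:ℂ)}ᶜ ⊆ {w : ℝ × ℝ | ¬ Complex.normSq (V w) = 0} ∩ Ω := by
      rintro w ⟨hw1, hw2⟩
      refine ⟨?_, interior_subset hw1⟩
      simp only [Set.mem_setOf_eq, Complex.normSq_eq_zero]
      simpa using hw2
    exact absurd (measure_mono_null hsub hnull) hpos.ne'
  -- pass to the entire function E
  set E : ℂ → ℂ := fun w => ∑ i, g i * Complex.exp ((Real.pi:ℂ)*(a i)*w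
    + (Real.pi:ℂ)*(a i)^2/2) with hE
  have hVE : ∀ x ξ : ℝ, V (x, ξ) = C0 * Complex.exp (-(Real.pi:ℂ)*x^2
      + (Real.pi:ℂ)/2*((x:ℂ) - Complex.I*ξ)^2) * E ((x:ℂ) - Complex.I*ξ) := by
    intro x ξ
    rw [hV, hE, Finset.mul_sum]
    refine Finset.sum_congr rfl fun i _ => ?_
    have hexp : Complex.exp (-(Real.pi:ℂ)*x^2 + (Real.pi:ℂ)/2*(((a i):ℂ) + x - Complex.I*ξ)^2)
        = Complex.exp (-(Real.pi:ℂ)*x^2 + (Real.pi:ℂ)/2*((x:ℂ) - Complex.I*ξ)^2)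
          * Complex.exp ((Real.pi:ℂ)*(a i)*((x:ℂ) - Complex.I*ξ) + (Real.pi:ℂ)*(a i)^2/2) := by
      rw [← Complex.exp_add]
      congr 1
      ring
    rw [stft_ga, hexp]
    ring
  -- E vanishes identically
  have hE0 : ∀ w : ℂ, E w = 0 := by
    obtain ⟨z0, hz0⟩ := hΩint
    obtain ⟨ε, hε, hball⟩ := Metric.isOpen_iff.mp isOpen_interior z0 hz0
    set w0 : ℂ := (z0.1 : ℂ) - Complex.I * z0.2 with hw0
    have hEball : ∀ w ∈ Metric.ball w0 ε, E w = 0 := by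
      intro w hw
      have hzmem : ((w.re, -w.im) : ℝ × ℝ) ∈ Metric.ball z0 ε := by
        rw [Metric.mem_ball] at hw ⊢
        rw [Prod.dist_eq]
        have hre : dist w.re z0.1 ≤ dist w w0 := by
          rw [Real.dist_eq, Complex.dist_eq]
          have h := Complex.abs_re_le_norm (w - w0)
          have : (w - w0).re = w.re - z0.1 := by
            simp [hw0, Complex.sub_re]
          rwa [this] at h
        have him : dist (-w.im) z0.2 ≤ dist w w0 := by
          rw [Real.dist_eq, Complex.dist_eq]
          have h := Complex.abs_im_le_norm (w - w0)
          have him2 : (w - w0).im = w.im + z0.2 := by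
            simp [hw0, Complex.sub_im]
          rw [him2] at h
          rw [show (-w.im - z0.2) = -(w.im + z0.2) from by ring, abs_neg]
          exact h
        exact max_lt (lt_of_le_of_lt hre hw) (lt_of_le_of_lt him hw)
      have hV0 := hVae _ (hball hzmem)
      rw [hVE w.re (-w.im)] at hV0
      have hww : ((w.re : ℂ) - Complex.I * ((-w.im : ℝ) : ℂ)) = w := by
        apply Complex.ext <;> simp
      rw [hww] at hV0
      rcases mul_eq_zero.mp hV0 with h | h
      · exact absurd h (mul_ne_zero C0_ne_zero (Complex.exp_ne_zero _))
      · exact h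
    have hEdiff : Differentiable ℂ E := by
      rw [hE]
      refine Differentiable.fun_sum fun i _ => (differentiable_const _).mul ?_
      exact Differentiable.cexp ((differentiable_id.const_mul _).add_const _)
    have han : AnalyticOnNhd ℂ E Set.univ :=
      hEdiff.differentiableOn.analyticOnNhd isOpen_univ
    have hev : E =ᶠ[nhds w0] 0 :=
      Filter.eventually_of_mem (Metric.ball_mem_nhds _ hε) hEball
    intro w
    exact han.eqOn_zero_of_preconnected_of_eventuallyEq_zero isPreconnected_univ
      (Set.mem_univ w0) hev (Set.mem_univ w)
  -- conclude by linear independence of characters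
  classical
  set χ : Fin n → (Multiplicative ℂ →* ℂ) := fun i =>
    { toFun := fun w => Complex.exp ((Real.pi : ℂ) * (a i) * w.toAdd)
      map_one' := by simp
      map_mul' := by
        intro u v
        simp [toAdd_mul, mul_add, Complex.exp_add] } with hχ
  have hχinj : Function.Injective χ := by
    intro i j hij
    have h1 : Complex.exp ((Real.pi : ℂ) * (a i)) = Complex.exp ((Real.pi : ℂ) * (a j)) := by
      have h := congrArg (fun φ : Multiplicative ℂ →* ℂ => φ (Multiplicative.ofAdd (1 : ℂ))) hij
      simpa [hχ] using h
    have h2 : Real.exp (Real.pi * a i) = Real.exp (Real.pi * a j) := by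
      rw [show ((Real.pi : ℂ) * (a i)) = ((Real.pi * a i : ℝ) : ℂ) from by push_cast; ring,
        show ((Real.pi : ℂ) * (a j)) = ((Real.pi * a j : ℝ) : ℂ) from by push_cast; ring,
        ← Complex.ofReal_exp, ← Complex.ofReal_exp] at h1
      exact_mod_cast h1
    have h3 : a i = a j := mul_left_cancel₀ Real.pi_ne_zero (Real.exp_eq_exp.mp h2)
    have h4 : ((i : ℕ) : ℝ) = ((j : ℕ) : ℝ) := h3
    exact Fin.ext (Nat.cast_inj.mp h4)
  have hLI := (linearIndependent_monoidHom (Multiplicative ℂ) ℂ).comp χ hχinj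
  have hsum : ∑ i, (g i * Complex.exp ((Real.pi : ℂ) * (a i)^2 / 2)) •
      ((fun f : Multiplicative ℂ →* ℂ => (f : Multiplicative ℂ → ℂ)) ∘ χ) i = 0 := by
    funext w
    simp only [Finset.sum_apply, Pi.smul_apply, smul_eq_mul, Pi.zero_apply,
      Function.comp_apply, hχ, MonoidHom.coe_mk, OneHom.coe_mk]
    have hEw := hE0 w.toAdd
    rw [hE] at hEw
    calc ∑ i, g i * Complex.exp ((Real.pi : ℂ) * (a i)^2 / 2)
          * Complex.exp ((Real.pi : ℂ) * (a i) * w.toAdd)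
        = ∑ i, g i * Complex.exp ((Real.pi : ℂ) * (a i) * w.toAdd
            + (Real.pi : ℂ) * (a i)^2 / 2) := by
          refine Finset.sum_congr rfl fun i _ => ?_
          rw [Complex.exp_add]
          ring
      _ = 0 := hEw
  have hz := Fintype.linearIndependent_iff.mp hLI _ hsum i0
  exact (mul_eq_zero.mp hz).resolve_right (Complex.exp_ne_zero _)
end
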